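/- Let ψ₀(t) = 8t(t²−1)/(t²+1)³ and η₀(t) = log(1+t²). Then ∫₀^∞ ψ₀ dt = 0, ∫₀^∞ ψ₀ η₀ dt = 2, ∫₀^∞ ψ₀ η₀² dt = 6, ∫₀^∞ ψ₀ η₀³ dt = 21, and ∫₀^∞ ψ₀ η₀⁴ dt = 90. -/

import Mathlib

open MeasureTheory Real Filter

noncomputable def psi0 (t : ℝ) : ℝ := 8 * t * (t ^ 2 - 1) / (t ^ 2 + 1) ^ 3
noncomputable def eta0 (t : ℝ) : ℝ := Real.log (1 + t ^ 2)

lemma upos (t : ℝ) : (0:ℝ) < 1 + t ^ 2 := by positivity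

lemma T1 (j : ℕ) : Tendsto (fun t : ℝ => Real.log (1 + t ^ 2) ^ j / (1 + t ^ 2)) atTop (nhds 0) := by
  have hu : Tendsto (fun t : ℝ => 1 + t ^ 2) atTop atTop :=
    tendsto_atTop_add_const_left _ 1 (tendsto_pow_atTop (by norm_num))
  have h := (Real.tendsto_pow_log_div_mul_add_atTop 1 0 j one_ne_zero).comp hu
  simpa [Function.comp_def] using h

lemma T2 (j : ℕ) : Tendsto (fun t : ℝ => Real.log (1 + t ^ 2) ^ j / (1 + t ^ 2) ^ 2) atTop (nhds 0) := by
  have hu : Tendsto (fun t : ℝ => 1 + t ^ 2) atTop atTop :=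
    tendsto_atTop_add_const_left _ 1 (tendsto_pow_atTop (by norm_num))
  have hinv : Tendsto (fun t : ℝ => (1 + t ^ 2)⁻¹) atTop (nhds 0) :=
    tendsto_inv_atTop_zero.comp hu
  have h := (T1 j).mul hinv
  rw [mul_zero] at h
  refine h.congr fun t => ?_
  rw [← div_eq_mul_inv, div_div, ← sq]

lemma main_aux (f F : ℝ → ℝ) (hder : ∀ t, HasDerivAt F (f t) t)
    (hcont : Continuous f) (hnn : ∀ t ∈ Set.Ioi (1:ℝ), 0 ≤ f t)
    (hlim : Tendsto F atTop (nhds 0)) :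
    (∫ t in Set.Ioi (0:ℝ), f t) = -F 0 := by
  have hFc : ContinuousWithinAt F (Set.Ici (1:ℝ)) 1 :=
    (hder 1).continuousAt.continuousWithinAt
  have hint1 : IntegrableOn f (Set.Ioi 1) :=
    integrableOn_Ioi_deriv_of_nonneg hFc (fun x _ => hder x) hnn hlim
  have hI1 : (∫ t in Set.Ioi (1:ℝ), f t) = 0 - F 1 :=
    integral_Ioi_of_hasDerivAt_of_nonneg hFc (fun x _ => hder x) hnn hlim
  have hint0 : IntegrableOn f (Set.Ioc 0 1) :=
    hcont.integrableOn_Ioc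
  have hI0 : (∫ t in Set.Ioc (0:ℝ) 1, f t) = F 1 - F 0 := by
    rw [← intervalIntegral.integral_of_le (by norm_num : (0:ℝ) ≤ 1)]
    exact intervalIntegral.integral_eq_sub_of_hasDerivAt (fun t _ => hder t)
      (hcont.intervalIntegrable 0 1)
  have hsplit : Set.Ioi (0:ℝ) = Set.Ioc 0 1 ∪ Set.Ioi 1 :=
    (Set.Ioc_union_Ioi_eq_Ioi (by norm_num)).symm
  rw [hsplit, setIntegral_union (Set.Ioc_disjoint_Ioi le_rfl) measurableSet_Ioi hint0 hint1,
    hI0, hI1]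
  ring

noncomputable def F0 (t : ℝ) : ℝ :=
  (-4) * (1) / (1 + t ^ 2) + (4) / (1 + t ^ 2) ^ 2

lemma hD0 (t : ℝ) : HasDerivAt F0 (psi0 t) t := by
  have hu := (upos t).ne'
  have hU : HasDerivAt (fun t : ℝ => 1 + t ^ 2) (2 * t) t := by
    simpa using ((hasDerivAt_pow 2 t).const_add 1)
  have hL : HasDerivAt (fun t : ℝ => Real.log (1 + t ^ 2)) (2 * t / (1 + t ^ 2)) t :=
    hU.log hu
  have hU2 : HasDerivAt (fun t : ℝ => (1 + t ^ 2) ^ 2) (2 * (1 + t ^ 2) ^ 1 * (2 * t)) t :=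
    hU.pow 2
  have hN1 := (hasDerivAt_const t (1:ℝ)).const_mul ((-4):ℝ)
  have hN2 := hasDerivAt_const t (4:ℝ)
  have h := (hN1.div hU hu).add (hN2.div hU2 (pow_ne_zero 2 hu))
  convert h using 1
  · rfl
  · rfl
  · rfl
  simp only [psi0, eta0]
  have h2 : (t:ℝ) ^ 2 + 1 ≠ 0 := by positivity
  have h3 : (1:ℝ) + t ^ 2 ≠ 0 := by positivity
  field_simp
  ring

lemma hT0 : Filter.Tendsto F0 Filter.atTop (nhds 0) := by
  have h := (((T1 0).const_mul ((-4)*1:ℝ)).add ((T2 0).const_mul (4:ℝ)))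
  norm_num at h
  refine h.congr fun t => ?_
  simp only [F0]
  ring

noncomputable def F1 (t : ℝ) : ℝ :=
  (-4) * (1 * Real.log (1 + t ^ 2) + 1) / (1 + t ^ 2) + (4 * Real.log (1 + t ^ 2) + 2) / (1 + t ^ 2) ^ 2

lemma hD1 (t : ℝ) : HasDerivAt F1 (psi0 t * eta0 t) t := by
  have hu := (upos t).ne'
  have hU : HasDerivAt (fun t : ℝ => 1 + t ^ 2) (2 * t) t := by
    simpa using ((hasDerivAt_pow 2 t).const_add 1)
  have hL : HasDerivAt (fun t : ℝ => Real.log (1 + t ^ 2)) (2 * t / (1 + t ^ 2)) t :=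
    hU.log hu
  have hU2 : HasDerivAt (fun t : ℝ => (1 + t ^ 2) ^ 2) (2 * (1 + t ^ 2) ^ 1 * (2 * t)) t :=
    hU.pow 2
  have hN1 := ((hL.const_mul (1:ℝ)).add_const (1:ℝ)).const_mul ((-4):ℝ)
  have hN2 := ((hL.const_mul (4:ℝ)).add_const (2:ℝ))
  have h := (hN1.div hU hu).add (hN2.div hU2 (pow_ne_zero 2 hu))
  convert h using 1
  · rfl
  · rfl
  · rfl
  simp only [psi0, eta0]
  have h2 : (t:ℝ) ^ 2 + 1 ≠ 0 := by positivity
  have h3 : (1:ℝ) + t ^ 2 ≠ 0 := by positivity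
  field_simp
  ring

lemma hT1 : Filter.Tendsto F1 Filter.atTop (nhds 0) := by
  have h := (((((T1 1).const_mul ((-4)*1:ℝ)).add ((T1 0).const_mul ((-4)*1:ℝ))).add ((T2 1).const_mul (4:ℝ))).add ((T2 0).const_mul (2:ℝ)))
  norm_num at h
  refine h.congr fun t => ?_
  simp only [F1]
  ring

noncomputable def F2 (t : ℝ) : ℝ :=
  (-4) * (1 * Real.log (1 + t ^ 2) ^ 2 + 2 * Real.log (1 + t ^ 2) + 2) / (1 + t ^ 2) + (4 * Real.log (1 + t ^ 2) ^ 2 + 4 * Real.log (1 + t ^ 2) + 2) / (1 + t ^ 2) ^ 2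

lemma hD2 (t : ℝ) : HasDerivAt F2 (psi0 t * eta0 t ^ 2) t := by
  have hu := (upos t).ne'
  have hU : HasDerivAt (fun t : ℝ => 1 + t ^ 2) (2 * t) t := by
    simpa using ((hasDerivAt_pow 2 t).const_add 1)
  have hL : HasDerivAt (fun t : ℝ => Real.log (1 + t ^ 2)) (2 * t / (1 + t ^ 2)) t :=
    hU.log hu
  have hU2 : HasDerivAt (fun t : ℝ => (1 + t ^ 2) ^ 2) (2 * (1 + t ^ 2) ^ 1 * (2 * t)) t :=
    hU.pow 2
  have hN1 := ((((hL.pow 2).const_mul (1:ℝ)).add (hL.const_mul (2:ℝ))).add_const (2:ℝ)).const_mul ((-4):ℝ)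
  have hN2 := ((((hL.pow 2).const_mul (4:ℝ)).add (hL.const_mul (4:ℝ))).add_const (2:ℝ))
  have h := (hN1.div hU hu).add (hN2.div hU2 (pow_ne_zero 2 hu))
  convert h using 1
  · rfl
  · rfl
  · rfl
  simp only [psi0, eta0, Pi.add_apply, Pi.pow_apply]
  have h2 : (t:ℝ) ^ 2 + 1 ≠ 0 := by positivity
  have h3 : (1:ℝ) + t ^ 2 ≠ 0 := by positivity
  field_simp
  ring

lemma hT2 : Filter.Tendsto F2 Filter.atTop (nhds 0) := by
  have h := (((((((T1 2).const_mul ((-4)*1:ℝ)).add ((T1 1).const_mul ((-4)*2:ℝ))).add ((T1 0).const_mul ((-4)*2:ℝ))).add ((T2 2).const_mul (4:ℝ))).add ((T2 1).const_mul (4:ℝ))).add ((T2 0).const_mul (2:ℝ)))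
  norm_num at h
  refine h.congr fun t => ?_
  simp only [F2]
  ring

noncomputable def F3 (t : ℝ) : ℝ :=
  (-4) * (1 * Real.log (1 + t ^ 2) ^ 3 + 3 * Real.log (1 + t ^ 2) ^ 2 + 6 * Real.log (1 + t ^ 2) + 6) / (1 + t ^ 2) + (4 * Real.log (1 + t ^ 2) ^ 3 + 6 * Real.log (1 + t ^ 2) ^ 2 + 6 * Real.log (1 + t ^ 2) + 3) / (1 + t ^ 2) ^ 2

lemma hD3 (t : ℝ) : HasDerivAt F3 (psi0 t * eta0 t ^ 3) t := by
  have hu := (upos t).ne'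
  have hU : HasDerivAt (fun t : ℝ => 1 + t ^ 2) (2 * t) t := by
    simpa using ((hasDerivAt_pow 2 t).const_add 1)
  have hL : HasDerivAt (fun t : ℝ => Real.log (1 + t ^ 2)) (2 * t / (1 + t ^ 2)) t :=
    hU.log hu
  have hU2 : HasDerivAt (fun t : ℝ => (1 + t ^ 2) ^ 2) (2 * (1 + t ^ 2) ^ 1 * (2 * t)) t :=
    hU.pow 2
  have hN1 := (((((hL.pow 3).const_mul (1:ℝ)).add ((hL.pow 2).const_mul (3:ℝ))).add (hL.const_mul (6:ℝ))).add_const (6:ℝ)).const_mul ((-4):ℝ)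
  have hN2 := (((((hL.pow 3).const_mul (4:ℝ)).add ((hL.pow 2).const_mul (6:ℝ))).add (hL.const_mul (6:ℝ))).add_const (3:ℝ))
  have h := (hN1.div hU hu).add (hN2.div hU2 (pow_ne_zero 2 hu))
  convert h using 1
  · rfl
  · rfl
  · rfl
  simp only [psi0, eta0, Pi.add_apply, Pi.pow_apply]
  have h2 : (t:ℝ) ^ 2 + 1 ≠ 0 := by positivity
  have h3 : (1:ℝ) + t ^ 2 ≠ 0 := by positivity
  field_simp
  ring

lemma hT3 : Filter.Tendsto F3 Filter.atTop (nhds 0) := by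
  have h := (((((((((T1 3).const_mul ((-4)*1:ℝ)).add ((T1 2).const_mul ((-4)*3:ℝ))).add ((T1 1).const_mul ((-4)*6:ℝ))).add ((T1 0).const_mul ((-4)*6:ℝ))).add ((T2 3).const_mul (4:ℝ))).add ((T2 2).const_mul (6:ℝ))).add ((T2 1).const_mul (6:ℝ))).add ((T2 0).const_mul (3:ℝ)))
  norm_num at h
  refine h.congr fun t => ?_
  simp only [F3]
  ring

noncomputable def F4 (t : ℝ) : ℝ :=
  (-4) * (1 * Real.log (1 + t ^ 2) ^ 4 + 4 * Real.log (1 + t ^ 2) ^ 3 + 12 * Real.log (1 + t ^ 2) ^ 2 + 24 * Real.log (1 + t ^ 2) + 24) / (1 + t ^ 2) + (4 * Real.log (1 + t ^ 2) ^ 4 + 8 * Real.log (1 + t ^ 2) ^ 3 + 12 * Real.log (1 + t ^ 2) ^ 2 + 12 * Real.log (1 + t ^ 2) + 6) / (1 + t ^ 2) ^ 2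

lemma hD4 (t : ℝ) : HasDerivAt F4 (psi0 t * eta0 t ^ 4) t := by
  have hu := (upos t).ne'
  have hU : HasDerivAt (fun t : ℝ => 1 + t ^ 2) (2 * t) t := by
    simpa using ((hasDerivAt_pow 2 t).const_add 1)
  have hL : HasDerivAt (fun t : ℝ => Real.log (1 + t ^ 2)) (2 * t / (1 + t ^ 2)) t :=
    hU.log hu
  have hU2 : HasDerivAt (fun t : ℝ => (1 + t ^ 2) ^ 2) (2 * (1 + t ^ 2) ^ 1 * (2 * t)) t :=
    hU.pow 2
  have hN1 := ((((((hL.pow 4).const_mul (1:ℝ)).add ((hL.pow 3).const_mul (4:ℝ))).add ((hL.pow 2).const_mul (12:ℝ))).add (hL.const_mul (24:ℝ))).add_const (24:ℝ)).const_mul ((-4):ℝ)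
  have hN2 := ((((((hL.pow 4).const_mul (4:ℝ)).add ((hL.pow 3).const_mul (8:ℝ))).add ((hL.pow 2).const_mul (12:ℝ))).add (hL.const_mul (12:ℝ))).add_const (6:ℝ))
  have h := (hN1.div hU hu).add (hN2.div hU2 (pow_ne_zero 2 hu))
  convert h using 1
  · rfl
  · rfl
  · rfl
  simp only [psi0, eta0, Pi.add_apply, Pi.pow_apply]
  have h2 : (t:ℝ) ^ 2 + 1 ≠ 0 := by positivity
  have h3 : (1:ℝ) + t ^ 2 ≠ 0 := by positivity
  field_simp
  ring

lemma hT4 : Filter.Tendsto F4 Filter.atTop (nhds 0) := by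
  have h := (((((((((((T1 4).const_mul ((-4)*1:ℝ)).add ((T1 3).const_mul ((-4)*4:ℝ))).add ((T1 2).const_mul ((-4)*12:ℝ))).add ((T1 1).const_mul ((-4)*24:ℝ))).add ((T1 0).const_mul ((-4)*24:ℝ))).add ((T2 4).const_mul (4:ℝ))).add ((T2 3).const_mul (8:ℝ))).add ((T2 2).const_mul (12:ℝ))).add ((T2 1).const_mul (12:ℝ))).add ((T2 0).const_mul (6:ℝ)))
  norm_num at h
  refine h.congr fun t => ?_
  simp only [F4]
  ring

lemma cont_psi : Continuous psi0 := by
  unfold psi0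
  exact Continuous.div (by fun_prop) (by fun_prop) (fun t => by positivity)

lemma cont_eta : Continuous eta0 := by
  unfold eta0
  exact Continuous.log (by fun_prop) (fun t => (upos t).ne')

lemma nn_f (k : ℕ) : ∀ t ∈ Set.Ioi (1:ℝ), 0 ≤ psi0 t * eta0 t ^ k := by
  intro t ht
  simp only [Set.mem_Ioi] at ht
  have h1 : 0 ≤ psi0 t := by
    unfold psi0
    apply div_nonneg _ (by positivity)
    nlinarith
  have h2 : 0 ≤ eta0 t := Real.log_nonneg (by nlinarith)
  positivity

theorem stmt7 :
    (∫ t in Set.Ioi (0 : ℝ), psi0 t) = 0 ∧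
    (∫ t in Set.Ioi (0 : ℝ), psi0 t * eta0 t) = 2 ∧
    (∫ t in Set.Ioi (0 : ℝ), psi0 t * eta0 t ^ 2) = 6 ∧
    (∫ t in Set.Ioi (0 : ℝ), psi0 t * eta0 t ^ 3) = 21 ∧
    (∫ t in Set.Ioi (0 : ℝ), psi0 t * eta0 t ^ 4) = 90 := by
  refine ⟨?_, ?_, ?_, ?_, ?_⟩
  · have h := main_aux _ F0 hD0 cont_psi (by simpa using nn_f 0) hT0
    rw [h]; norm_num [F0, Real.log_one]
  · have h := main_aux _ F1 hD1 (cont_psi.mul cont_eta) (by simpa using nn_f 1) hT1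
    rw [h]; norm_num [F1, Real.log_one]
  · have h := main_aux _ F2 hD2 (cont_psi.mul (cont_eta.pow 2)) (nn_f 2) hT2
    rw [h]; norm_num [F2, Real.log_one]
  · have h := main_aux _ F3 hD3 (cont_psi.mul (cont_eta.pow 3)) (nn_f 3) hT3
    rw [h]; norm_num [F3, Real.log_one]
  · have h := main_aux _ F4 hD4 (cont_psi.mul (cont_eta.pow 4)) (nn_f 4) hT4
    rw [h]; norm_num [F4, Real.log_one]
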